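/- (Theorem 3.2.1: dichotomy for finite-type surfaces of the second family) Under the ruled hypothesis Q = −uP, u_y + u·u_x = 0, suppose there exist real constants λ₁, λ₂, λ₃ with Δx = λ₁·x, Δy = λ₂·y, Δf = λ₃·f on D. Then exactly one of the following holds: either (λ₁, λ₂, λ₃) = (0, 0, 0) and f is harmonic (f_xx + f_yy = 0, so the surface has zero mean curvature), or (λ₁, λ₂, λ₃) ≠ (0, 0, 0) and f is a solution of the partial differential equation f_xx + f_yy = ½((λ₂ − λ₁)xy − 2λ₃ f)·(1 + (f_x + y/2)²(1 + u²))² on D with right-hand side not identically of the trivial form, i.e. ((λ₂ − λ₁), λ₃) determining a nonzero linear combination of xy and f unless f is harmonic. -/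

import Mathlib

noncomputable section

/-- Partial derivative with respect to the first (x) variable. -/
def pdx (f : ℝ × ℝ → ℝ) : ℝ × ℝ → ℝ := fun p => fderiv ℝ f p (1, 0)

/-- Partial derivative with respect to the second (y) variable. -/
def pdy (f : ℝ × ℝ → ℝ) : ℝ × ℝ → ℝ := fun p => fderiv ℝ f p (0, 1)

/-- `P = f_x + y/2`. -/
def Pf (f : ℝ × ℝ → ℝ) : ℝ × ℝ → ℝ := fun p => pdx f p + p.2 / 2

/-- `Q = f_y - x/2`. -/
def Qf (f : ℝ × ℝ → ℝ) : ℝ × ℝ → ℝ := fun p => pdy f p - p.1 / 2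

/-- First fundamental form coefficient `E = 1 + P²`. -/
def Ef (f : ℝ × ℝ → ℝ) : ℝ × ℝ → ℝ := fun p => 1 + Pf f p ^ 2

/-- First fundamental form coefficient `F = P·Q`. -/
def Ff (f : ℝ × ℝ → ℝ) : ℝ × ℝ → ℝ := fun p => Pf f p * Qf f p

/-- First fundamental form coefficient `G = 1 + Q²`. -/
def Gf (f : ℝ × ℝ → ℝ) : ℝ × ℝ → ℝ := fun p => 1 + Qf f p ^ 2

/-- `W = √(EG − F²) = √(1 + P² + Q²)`. -/
def Wf (f : ℝ × ℝ → ℝ) : ℝ × ℝ → ℝ := fun p => Real.sqrt (1 + Pf f p ^ 2 + Qf f p ^ 2)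

/-- Second fundamental form coefficient `L = (f_xx + PQ)/W`. -/
def Lf (f : ℝ × ℝ → ℝ) : ℝ × ℝ → ℝ := fun p => (pdx (pdx f) p + Pf f p * Qf f p) / Wf f p

/-- Second fundamental form coefficient `M = (f_xy + (Q² − P²)/2)/W`. -/
def Mf (f : ℝ × ℝ → ℝ) : ℝ × ℝ → ℝ :=
  fun p => (pdx (pdy f) p + (Qf f p ^ 2 - Pf f p ^ 2) / 2) / Wf f p

/-- Second fundamental form coefficient `N = (f_yy − PQ)/W`. -/
def Nf (f : ℝ × ℝ → ℝ) : ℝ × ℝ → ℝ := fun p => (pdy (pdy f) p - Pf f p * Qf f p) / Wf f p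

/-- Mean curvature `H = (EN − 2FM + GL)/(2W²)`. -/
def Hf (f : ℝ × ℝ → ℝ) : ℝ × ℝ → ℝ :=
  fun p => (Ef f p * Nf f p - 2 * Ff f p * Mf f p + Gf f p * Lf f p) / (2 * Wf f p ^ 2)

/-- The Laplace–Beltrami operator of the graph of `f`, with the sign convention
`Δφ = −(1/W)[∂_x((G φ_x − F φ_y)/W) + ∂_y((−F φ_x + E φ_y)/W)]`. -/
def lapS (f φ : ℝ × ℝ → ℝ) : ℝ × ℝ → ℝ := fun p =>
  -(1 / Wf f p) *
    (pdx (fun q => (Gf f q * pdx φ q - Ff f q * pdy φ q) / Wf f q) p +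
     pdy (fun q => (-(Ff f q) * pdx φ q + Ef f q * pdy φ q) / Wf f q) p)

/-- Mean curvature in the form `H = (f_xx + f_yy)/(2W³)`. -/
def Hm (f : ℝ × ℝ → ℝ) : ℝ × ℝ → ℝ :=
  fun p => (pdx (pdx f) p + pdy (pdy f) p) / (2 * Wf f p ^ 3)

/-- `H₁ = (f_xx + f_yy)/W`. -/
def H1f (f : ℝ × ℝ → ℝ) : ℝ × ℝ → ℝ :=
  fun p => (pdx (pdx f) p + pdy (pdy f) p) / Wf f p

/-! ### Auxiliary machinery: partial-derivative calculus -/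

def D2 (a b : ℝ) : ℝ × ℝ →L[ℝ] ℝ :=
  a • (ContinuousLinearMap.fst ℝ ℝ ℝ) + b • (ContinuousLinearMap.snd ℝ ℝ ℝ)

lemma D2_apply (a b : ℝ) (v : ℝ × ℝ) : D2 a b v = a * v.1 + b * v.2 := by
  simp [D2]

lemma clm_eq_D2 (L : ℝ × ℝ →L[ℝ] ℝ) : L = D2 (L (1, 0)) (L (0, 1)) := by
  apply ContinuousLinearMap.ext
  intro v
  have hv : v = v.1 • ((1 : ℝ), (0 : ℝ)) + v.2 • ((0 : ℝ), (1 : ℝ)) := by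
    ext <;> simp
  rw [D2_apply]
  conv_lhs => rw [hv]
  rw [map_add, map_smul, map_smul, smul_eq_mul, smul_eq_mul]
  ring

def HasPD (g : ℝ × ℝ → ℝ) (p : ℝ × ℝ) (gx gy : ℝ) : Prop :=
  HasFDerivAt g (D2 gx gy) p

lemma HasPD.hasFDerivAt {g p gx gy} (h : HasPD g p gx gy) :
    HasFDerivAt g (D2 gx gy) p := h

lemma HasPD.pdx_eq {g p gx gy} (h : HasPD g p gx gy) : pdx g p = gx := by
  rw [pdx, h.hasFDerivAt.fderiv, D2_apply]; ring

lemma HasPD.pdy_eq {g p gx gy} (h : HasPD g p gx gy) : pdy g p = gy := by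
  rw [pdy, h.hasFDerivAt.fderiv, D2_apply]; ring

lemma HasPD.congr_deriv {g p gx gy gx' gy'} (h : HasPD g p gx gy)
    (hx : gx' = gx) (hy : gy' = gy) : HasPD g p gx' gy' := by rw [hx, hy]; exact h

lemma hasPD_of_hasFDerivAt {g : ℝ × ℝ → ℝ} {p : ℝ × ℝ} {L : ℝ × ℝ →L[ℝ] ℝ}
    (h : HasFDerivAt g L p) : HasPD g p (L (1, 0)) (L (0, 1)) := by
  rw [HasPD, ← clm_eq_D2]; exact h

lemma hasPD_of_differentiableAt {g : ℝ × ℝ → ℝ} {p : ℝ × ℝ}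
    (h : DifferentiableAt ℝ g p) : HasPD g p (pdx g p) (pdy g p) :=
  hasPD_of_hasFDerivAt h.hasFDerivAt

lemma hasPD_const (p : ℝ × ℝ) (c : ℝ) : HasPD (fun _ => c) p 0 0 := by
  rw [HasPD, show D2 (0:ℝ) (0:ℝ) = 0 from ContinuousLinearMap.ext fun v => by simp [D2_apply]]
  exact hasFDerivAt_const c p

lemma hasPD_fst (p : ℝ × ℝ) : HasPD (fun q => q.1) p 1 0 := by
  have h : HasFDerivAt (fun q : ℝ × ℝ => q.1) (ContinuousLinearMap.fst ℝ ℝ ℝ) p :=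
    hasFDerivAt_fst
  exact h.congr_fderiv (ContinuousLinearMap.ext fun v => by simp [D2_apply])

lemma hasPD_snd (p : ℝ × ℝ) : HasPD (fun q => q.2) p 0 1 := by
  have h : HasFDerivAt (fun q : ℝ × ℝ => q.2) (ContinuousLinearMap.snd ℝ ℝ ℝ) p :=
    hasFDerivAt_snd
  exact h.congr_fderiv (ContinuousLinearMap.ext fun v => by simp [D2_apply])

lemma HasPD.add {a b p ax ay bx by'} (ha : HasPD a p ax ay) (hb : HasPD b p bx by') :
    HasPD (fun q => a q + b q) p (ax + bx) (ay + by') :=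
  (HasFDerivAt.add ha.hasFDerivAt hb.hasFDerivAt).congr_fderiv
    (ContinuousLinearMap.ext fun v => by simp [D2_apply]; ring)

lemma HasPD.sub {a b p ax ay bx by'} (ha : HasPD a p ax ay) (hb : HasPD b p bx by') :
    HasPD (fun q => a q - b q) p (ax - bx) (ay - by') :=
  (HasFDerivAt.sub ha.hasFDerivAt hb.hasFDerivAt).congr_fderiv
    (ContinuousLinearMap.ext fun v => by simp [D2_apply]; ring)

lemma HasPD.neg {a p ax ay} (ha : HasPD a p ax ay) :
    HasPD (fun q => -a q) p (-ax) (-ay) :=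
  (HasFDerivAt.neg ha.hasFDerivAt).congr_fderiv
    (ContinuousLinearMap.ext fun v => by simp [D2_apply]; ring)

lemma HasPD.mul {a b : ℝ × ℝ → ℝ} {p ax ay bx by'} (ha : HasPD a p ax ay)
    (hb : HasPD b p bx by') :
    HasPD (fun q => a q * b q) p (a p * bx + b p * ax) (a p * by' + b p * ay) :=
  (HasFDerivAt.mul ha.hasFDerivAt hb.hasFDerivAt).congr_fderiv
    (ContinuousLinearMap.ext fun v => by
      simp [D2_apply, smul_eq_mul]; ring)

lemma HasPD.inv {b : ℝ × ℝ → ℝ} {p bx by'} (hb : HasPD b p bx by') (hb0 : b p ≠ 0) :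
    HasPD (fun q => (b q)⁻¹) p (-bx / b p ^ 2) (-by' / b p ^ 2) := by
  have h := (hasDerivAt_inv hb0).comp_hasFDerivAt p hb.hasFDerivAt
  exact h.congr_fderiv (ContinuousLinearMap.ext fun v => by
    simp [D2_apply, smul_eq_mul]
    field_simp
    ring)

lemma HasPD.div {a b : ℝ × ℝ → ℝ} {p ax ay bx by'} (ha : HasPD a p ax ay)
    (hb : HasPD b p bx by') (hb0 : b p ≠ 0) :
    HasPD (fun q => a q / b q) p ((b p * ax - a p * bx) / b p ^ 2)
      ((b p * ay - a p * by') / b p ^ 2) := by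
  have h := ha.mul (hb.inv hb0)
  have e : (fun q => a q * (b q)⁻¹) = fun q => a q / b q := by
    funext q; rw [div_eq_mul_inv]
  rw [e] at h
  refine h.congr_deriv ?_ ?_ <;> field_simp <;> ring

lemma HasPD.sq {a : ℝ × ℝ → ℝ} {p ax ay} (ha : HasPD a p ax ay) :
    HasPD (fun q => a q ^ 2) p (2 * a p * ax) (2 * a p * ay) := by
  have h := ha.mul ha
  have e : (fun q => a q * a q) = fun q => a q ^ 2 := by funext q; ring
  rw [e] at h
  exact h.congr_deriv (by ring) (by ring)

lemma HasPD.sqrt {a : ℝ × ℝ → ℝ} {p ax ay} (ha : HasPD a p ax ay) (h0 : a p ≠ 0) :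
    HasPD (fun q => Real.sqrt (a q)) p (ax / (2 * Real.sqrt (a p)))
      (ay / (2 * Real.sqrt (a p))) :=
  (HasFDerivAt.sqrt ha.hasFDerivAt h0).congr_fderiv
    (ContinuousLinearMap.ext fun v => by simp [D2_apply, smul_eq_mul]; ring)

lemma HasPD.congr_nhds {g h : ℝ × ℝ → ℝ} {p a b} (hg : HasPD g p a b)
    (he : h =ᶠ[nhds p] g) : HasPD h p a b :=
  HasFDerivAt.congr_of_eventuallyEq hg.hasFDerivAt he

lemma HasPD.unique_pd {g p ax ay bx by'} (h1 : HasPD g p ax ay) (h2 : HasPD g p bx by') :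
    ax = bx ∧ ay = by' := by
  have h := h1.hasFDerivAt.unique h2.hasFDerivAt
  constructor
  · have := congrArg (fun L : ℝ × ℝ →L[ℝ] ℝ => L ((1:ℝ), (0:ℝ))) h
    simpa [D2_apply] using this
  · have := congrArg (fun L : ℝ × ℝ →L[ℝ] ℝ => L ((0:ℝ), (1:ℝ))) h
    simpa [D2_apply] using this

lemma pd_symm (f : ℝ × ℝ → ℝ) (p : ℝ × ℝ) (hf : ContDiffAt ℝ (⊤ : ℕ∞) f p) :
    pdx (pdy f) p = pdy (pdx f) p := by
  have h2 : ContDiffAt ℝ (⊤ : ℕ∞) (fderiv ℝ f) p := hf.fderiv_right (by exact_mod_cast le_top)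
  have hd2 : DifferentiableAt ℝ (fderiv ℝ f) p := h2.differentiableAt (by simp)
  have hsymm : IsSymmSndFDerivAt ℝ f p := hf.isSymmSndFDerivAt
    (by rw [show ((2:WithTop ℕ∞)) = ((2:ℕ∞):WithTop ℕ∞) from rfl, minSmoothness_of_isRCLikeNormedField]; exact WithTop.coe_le_coe.mpr le_top)
  have hx : ∀ v : ℝ × ℝ, fderiv ℝ (fun q => fderiv ℝ f q v) p
      = (fderiv ℝ (fderiv ℝ f) p).flip v := by
    intro v
    have h := hd2.hasFDerivAt.clm_apply (hasFDerivAt_const v p)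
    simpa using h.fderiv
  rw [pdx, pdy, show pdy f = fun q => fderiv ℝ f q (0,1) from rfl,
    show pdx f = fun q => fderiv ℝ f q (1,0) from rfl, hx, hx]
  simpa using hsymm.eq (1,0) (0,1)

lemma clearW (W S A B C A' B' C' R : ℝ) (hWsq : W^2 = S) (hW : W ≠ 0)
    (h : -(1/W) * ((W*A - B*(C/(2*W)))/W^2 + (W*A' - B'*(C'/(2*W)))/W^2) = R) :
    (B*C + B'*C')/2 - (A+A')*S = R*S^2 := by
  subst hWsq
  field_simp at h
  linear_combination (1/2) * h

lemma final_algebra (x y P Q S E0 F0 G0 r s t u ux uy fx fy f0 l1 l2 l3 : ℝ)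
    (hS : S = 1 + P^2 + Q^2)
    (hE0 : E0 = 1 + P^2) (hF0 : F0 = P * Q) (hG0 : G0 = 1 + Q^2)
    (hfx : fx = P - y/2) (hfy : fy = Q + x/2)
    (hQr : Q = -u * P)
    (hsx : s - 1/2 = -u * r + P * -ux)
    (hty : t = -u * (s + 1/2) + P * -uy)
    (hbu : uy + u * ux = 0)
    (ev1 : (G0 * (2*P*r + 2*Q*(s - 1/2)) + -F0 * (2*P*(s + 1/2) + 2*Q*t)) / 2
        - (2*Q*(s - 1/2) + -(P*t + Q*(s + 1/2))) * S = (l1 * x) * S^2)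
    (ev2 : (-F0 * (2*P*r + 2*Q*(s - 1/2)) + E0 * (2*P*(s + 1/2) + 2*Q*t)) / 2
        - (-(P*(s - 1/2) + Q*r) + 2*P*(s + 1/2)) * S = (l2 * y) * S^2)
    (ev3 : ((G0*fx - F0*fy) * (2*P*r + 2*Q*(s - 1/2))
            + (-F0*fx + E0*fy) * (2*P*(s + 1/2) + 2*Q*t)) / 2
        - (((G0*r + fx*(2*Q*(s - 1/2))) - (F0*s + fy*(P*(s - 1/2) + Q*r)))
            + ((-F0*s + fx*(-(P*t + Q*(s + 1/2)))) + (E0*t + fy*(2*P*(s + 1/2))))) * S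
        = (l3 * f0) * S^2) :
    r + t = 1/2*((l2 - l1)*(x*y) - 2*l3*f0)*(1 + P^2*(1 + u^2))^2 := by
  have huy : uy = -(u * ux) := by linarith
  subst huy
  have hs : s = 1/2 + (-u * r + P * -ux) := by linarith
  subst hty
  subst hs
  subst hQr hS hE0 hF0 hG0 hfx hfy
  linear_combination (-(y/2)) * ev1 + (x/2) * ev2 + (-1) * ev3
lemma main_pde
    (D : Set (ℝ × ℝ)) (hD : IsOpen D)
    (f : ℝ × ℝ → ℝ) (hf : ContDiffOn ℝ (⊤ : ℕ∞) f D)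
    (u : ℝ × ℝ → ℝ) (hu : ContDiffOn ℝ (⊤ : ℕ∞) u D)
    (hruled : ∀ p ∈ D, Qf f p = -(u p) * Pf f p)
    (hburgers : ∀ p ∈ D, pdy u p + u p * pdx u p = 0)
    (l1 l2 l3 : ℝ)
    (h1 : ∀ p ∈ D, lapS f (fun q => q.1) p = l1 * p.1)
    (h2 : ∀ p ∈ D, lapS f (fun q => q.2) p = l2 * p.2)
    (h3 : ∀ p ∈ D, lapS f f p = l3 * f p)
    (p : ℝ × ℝ) (hp : p ∈ D) :
    pdx (pdx f) p + pdy (pdy f) p =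
      (1 / 2) * ((l2 - l1) * (p.1 * p.2) - 2 * l3 * f p) *
        (1 + (pdx f p + p.2 / 2) ^ 2 * (1 + u p ^ 2)) ^ 2 := by
  have hmem : D ∈ nhds p := hD.mem_nhds hp
  have hfp : ContDiffAt ℝ (⊤ : ℕ∞) f p := hf.contDiffAt hmem
  have hup : ContDiffAt ℝ (⊤ : ℕ∞) u p := hu.contDiffAt hmem
  have hC2 : ContDiffAt ℝ (⊤ : ℕ∞) (fderiv ℝ f) p := hfp.fderiv_right (by exact_mod_cast le_top)
  have hd2 : DifferentiableAt ℝ (fderiv ℝ f) p := hC2.differentiableAt (by simp)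
  have hdfx : DifferentiableAt ℝ (pdx f) p := hd2.clm_apply (differentiableAt_const _)
  have hdfy : DifferentiableAt ℝ (pdy f) p := hd2.clm_apply (differentiableAt_const _)
  have hdu : DifferentiableAt ℝ u p := hup.differentiableAt (by simp)
  have hsymm : pdx (pdy f) p = pdy (pdx f) p := pd_symm f p hfp
  set r := pdx (pdx f) p with hrdef
  set s := pdx (pdy f) p with hsdef
  set t := pdy (pdy f) p with htdef
  -- first derivatives of the partials
  have hfx : HasPD (pdx f) p r s :=
    (hasPD_of_differentiableAt hdfx).congr_deriv hrdef hsymm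
  have hfy : HasPD (pdy f) p s t :=
    (hasPD_of_differentiableAt hdfy).congr_deriv hsdef htdef
  have hu0 : HasPD u p (pdx u p) (pdy u p) := hasPD_of_differentiableAt hdu
  -- P, Q, E, F, G, W
  have hP : HasPD (Pf f) p r (s + 1/2) :=
    (hfx.add ((hasPD_snd p).div (hasPD_const p 2) (by norm_num))).congr_deriv
      (by norm_num) (by norm_num)
  have hQ : HasPD (Qf f) p (s - 1/2) t :=
    (hfy.sub ((hasPD_fst p).div (hasPD_const p 2) (by norm_num))).congr_deriv
      (by norm_num) (by norm_num)
  have hE : HasPD (Ef f) p (2*Pf f p*r) (2*Pf f p*(s + 1/2)) :=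
    ((hasPD_const p 1).add hP.sq).congr_deriv (by ring) (by ring)
  have hG : HasPD (Gf f) p (2*Qf f p*(s - 1/2)) (2*Qf f p*t) :=
    ((hasPD_const p 1).add hQ.sq).congr_deriv (by ring) (by ring)
  have hF : HasPD (Ff f) p (Pf f p*(s - 1/2) + Qf f p*r) (Pf f p*t + Qf f p*(s + 1/2)) :=
    (hP.mul hQ).congr_deriv (by ring) (by ring)
  have hFneg : HasPD (fun q => -Ff f q) p (-(Pf f p*(s - 1/2) + Qf f p*r))
      (-(Pf f p*t + Qf f p*(s + 1/2))) := hF.neg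
  have hSin : HasPD (fun q => 1 + Pf f q ^ 2 + Qf f q ^ 2) p
      (2*Pf f p*r + 2*Qf f p*(s - 1/2)) (2*Pf f p*(s + 1/2) + 2*Qf f p*t) :=
    (((hasPD_const p 1).add hP.sq).add hQ.sq).congr_deriv (by ring) (by ring)
  have hSpos : (0:ℝ) < 1 + Pf f p ^ 2 + Qf f p ^ 2 := by positivity
  have hWpos : 0 < Wf f p := Real.sqrt_pos.mpr hSpos
  have hWne : Wf f p ≠ 0 := ne_of_gt hWpos
  have hWsq : Wf f p ^ 2 = 1 + Pf f p ^ 2 + Qf f p ^ 2 := Real.sq_sqrt (le_of_lt hSpos)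
  have hW : HasPD (Wf f) p
      ((2*Pf f p*r + 2*Qf f p*(s - 1/2)) / (2 * Wf f p))
      ((2*Pf f p*(s + 1/2) + 2*Qf f p*t) / (2 * Wf f p)) := hSin.sqrt (ne_of_gt hSpos)
  -- derivative relations from the ruled hypothesis
  have hQ2base : HasPD (fun q => -u q * Pf f q) p
      (-u p * r + Pf f p * -pdx u p) (-u p * (s + 1/2) + Pf f p * -pdy u p) :=
    hu0.neg.mul hP
  have he : Qf f =ᶠ[nhds p] fun q => -u q * Pf f q :=
    Filter.eventually_of_mem hmem fun q hq => hruled q hq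
  have hQD : HasPD (Qf f) p (-u p * r + Pf f p * -pdx u p)
      (-u p * (s + 1/2) + Pf f p * -pdy u p) := hQ2base.congr_nhds he
  have hpair := hQ.unique_pd hQD
  -- the three quotient functions and the Laplacian values
  have hA1 : HasPD (fun q => Gf f q / Wf f q) p
      ((Wf f p * (2*Qf f p*(s - 1/2)) -
        Gf f p * ((2*Pf f p*r + 2*Qf f p*(s - 1/2)) / (2 * Wf f p))) / Wf f p ^ 2)
      ((Wf f p * (2*Qf f p*t) -
        Gf f p * ((2*Pf f p*(s + 1/2) + 2*Qf f p*t) / (2 * Wf f p))) / Wf f p ^ 2) :=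
    hG.div hW hWne
  have hB1 : HasPD (fun q => -Ff f q / Wf f q) p
      ((Wf f p * -(Pf f p*(s - 1/2) + Qf f p*r) -
        -Ff f p * ((2*Pf f p*r + 2*Qf f p*(s - 1/2)) / (2 * Wf f p))) / Wf f p ^ 2)
      ((Wf f p * -(Pf f p*t + Qf f p*(s + 1/2)) -
        -Ff f p * ((2*Pf f p*(s + 1/2) + 2*Qf f p*t) / (2 * Wf f p))) / Wf f p ^ 2) :=
    hFneg.div hW hWne
  have hB2 : HasPD (fun q => Ef f q / Wf f q) p
      ((Wf f p * (2*Pf f p*r) -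
        Ef f p * ((2*Pf f p*r + 2*Qf f p*(s - 1/2)) / (2 * Wf f p))) / Wf f p ^ 2)
      ((Wf f p * (2*Pf f p*(s + 1/2)) -
        Ef f p * ((2*Pf f p*(s + 1/2) + 2*Qf f p*t) / (2 * Wf f p))) / Wf f p ^ 2) :=
    hE.div hW hWne
  have hN3 : HasPD (fun q => Gf f q * pdx f q - Ff f q * pdy f q) p
      ((Gf f p * r + pdx f p * (2*Qf f p*(s - 1/2))) -
        (Ff f p * s + pdy f p * (Pf f p*(s - 1/2) + Qf f p*r)))
      ((Gf f p * s + pdx f p * (2*Qf f p*t)) -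
        (Ff f p * t + pdy f p * (Pf f p*t + Qf f p*(s + 1/2)))) :=
    (hG.mul hfx).sub (hF.mul hfy)
  have hM3 : HasPD (fun q => -Ff f q * pdx f q + Ef f q * pdy f q) p
      ((-Ff f p * r + pdx f p * -(Pf f p*(s - 1/2) + Qf f p*r)) +
        (Ef f p * s + pdy f p * (2*Pf f p*r)))
      ((-Ff f p * s + pdx f p * -(Pf f p*t + Qf f p*(s + 1/2))) +
        (Ef f p * t + pdy f p * (2*Pf f p*(s + 1/2)))) :=
    (hFneg.mul hfx).add (hE.mul hfy)
  have hA3 : HasPD (fun q => (Gf f q * pdx f q - Ff f q * pdy f q) / Wf f q) p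
      ((Wf f p * ((Gf f p * r + pdx f p * (2*Qf f p*(s - 1/2))) -
          (Ff f p * s + pdy f p * (Pf f p*(s - 1/2) + Qf f p*r))) -
        (Gf f p * pdx f p - Ff f p * pdy f p) *
          ((2*Pf f p*r + 2*Qf f p*(s - 1/2)) / (2 * Wf f p))) / Wf f p ^ 2)
      ((Wf f p * ((Gf f p * s + pdx f p * (2*Qf f p*t)) -
          (Ff f p * t + pdy f p * (Pf f p*t + Qf f p*(s + 1/2)))) -
        (Gf f p * pdx f p - Ff f p * pdy f p) *
          ((2*Pf f p*(s + 1/2) + 2*Qf f p*t) / (2 * Wf f p))) / Wf f p ^ 2) :=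
    hN3.div hW hWne
  have hB3 : HasPD (fun q => (-Ff f q * pdx f q + Ef f q * pdy f q) / Wf f q) p
      ((Wf f p * ((-Ff f p * r + pdx f p * -(Pf f p*(s - 1/2) + Qf f p*r)) +
          (Ef f p * s + pdy f p * (2*Pf f p*r))) -
        (-Ff f p * pdx f p + Ef f p * pdy f p) *
          ((2*Pf f p*r + 2*Qf f p*(s - 1/2)) / (2 * Wf f p))) / Wf f p ^ 2)
      ((Wf f p * ((-Ff f p * s + pdx f p * -(Pf f p*t + Qf f p*(s + 1/2))) +
          (Ef f p * t + pdy f p * (2*Pf f p*(s + 1/2)))) -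
        (-Ff f p * pdx f p + Ef f p * pdy f p) *
          ((2*Pf f p*(s + 1/2) + 2*Qf f p*t) / (2 * Wf f p))) / Wf f p ^ 2) :=
    hM3.div hW hWne
  -- equation 1
  have eA1 : (fun q => (Gf f q * pdx (fun w => w.1) q - Ff f q * pdy (fun w => w.1) q) / Wf f q)
      = fun q => Gf f q / Wf f q := by
    funext q; rw [(hasPD_fst q).pdx_eq, (hasPD_fst q).pdy_eq]; ring
  have eB1 : (fun q => (-Ff f q * pdx (fun w => w.1) q + Ef f q * pdy (fun w => w.1) q) / Wf f q)
      = fun q => -Ff f q / Wf f q := by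
    funext q; rw [(hasPD_fst q).pdx_eq, (hasPD_fst q).pdy_eq]; ring
  have ev1 := h1 p hp
  simp only [lapS] at ev1
  rw [eA1, eB1, hA1.pdx_eq, hB1.pdy_eq] at ev1
  have ev1' := clearW (Wf f p) (1 + Pf f p ^ 2 + Qf f p ^ 2)
    (2*Qf f p*(s - 1/2)) (Gf f p) (2*Pf f p*r + 2*Qf f p*(s - 1/2))
    (-(Pf f p*t + Qf f p*(s + 1/2))) (-Ff f p) (2*Pf f p*(s + 1/2) + 2*Qf f p*t)
    (l1 * p.1) hWsq hWne ev1
  -- equation 2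
  have eA2 : (fun q => (Gf f q * pdx (fun w => w.2) q - Ff f q * pdy (fun w => w.2) q) / Wf f q)
      = fun q => -Ff f q / Wf f q := by
    funext q; rw [(hasPD_snd q).pdx_eq, (hasPD_snd q).pdy_eq]; ring
  have eB2 : (fun q => (-Ff f q * pdx (fun w => w.2) q + Ef f q * pdy (fun w => w.2) q) / Wf f q)
      = fun q => Ef f q / Wf f q := by
    funext q; rw [(hasPD_snd q).pdx_eq, (hasPD_snd q).pdy_eq]; ring
  have ev2 := h2 p hp
  simp only [lapS] at ev2
  rw [eA2, eB2, hB1.pdx_eq, hB2.pdy_eq] at ev2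
  have ev2' := clearW (Wf f p) (1 + Pf f p ^ 2 + Qf f p ^ 2)
    (-(Pf f p*(s - 1/2) + Qf f p*r)) (-Ff f p) (2*Pf f p*r + 2*Qf f p*(s - 1/2))
    (2*Pf f p*(s + 1/2)) (Ef f p) (2*Pf f p*(s + 1/2) + 2*Qf f p*t)
    (l2 * p.2) hWsq hWne ev2
  -- equation 3
  have ev3 := h3 p hp
  simp only [lapS] at ev3
  rw [hA3.pdx_eq, hB3.pdy_eq] at ev3
  have ev3' := clearW (Wf f p) (1 + Pf f p ^ 2 + Qf f p ^ 2)
    ((Gf f p * r + pdx f p * (2*Qf f p*(s - 1/2))) -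
      (Ff f p * s + pdy f p * (Pf f p*(s - 1/2) + Qf f p*r)))
    (Gf f p * pdx f p - Ff f p * pdy f p) (2*Pf f p*r + 2*Qf f p*(s - 1/2))
    ((-Ff f p * s + pdx f p * -(Pf f p*t + Qf f p*(s + 1/2))) +
      (Ef f p * t + pdy f p * (2*Pf f p*(s + 1/2))))
    (-Ff f p * pdx f p + Ef f p * pdy f p) (2*Pf f p*(s + 1/2) + 2*Qf f p*t)
    (l3 * f p) hWsq hWne ev3
  -- conclude
  exact final_algebra p.1 p.2 (Pf f p) (Qf f p) (1 + Pf f p ^ 2 + Qf f p ^ 2)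
    (Ef f p) (Ff f p) (Gf f p) r s t (u p) (pdx u p) (pdy u p) (pdx f p) (pdy f p)
    (f p) l1 l2 l3 rfl rfl rfl rfl (by simp only [Pf]; ring) (by simp only [Qf]; ring)
    (hruled p hp) hpair.1 hpair.2 (hburgers p hp) ev1' ev2' ev3'
/-- **Theorem 3.2.1 (dichotomy for finite-type surfaces of the second family)**: under the
ruled hypothesis `Q = −uP`, `u_y + u·u_x = 0`, if `Δx = λ₁x`, `Δy = λ₂y`, `Δf = λ₃f` on `D`,
then exactly one of the following holds: either `(λ₁, λ₂, λ₃) = (0,0,0)` and `f` is harmonic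
(`f_xx + f_yy = 0`, so the surface has zero mean curvature), or `(λ₁, λ₂, λ₃) ≠ (0,0,0)` and
`f` solves `f_xx + f_yy = ½((λ₂ − λ₁)xy − 2λ₃f)(1 + (f_x + y/2)²(1 + u²))²` on `D` with
`(λ₂ − λ₁, λ₃) ≠ (0, 0)` unless `f` is harmonic. -/
theorem finite_type_S2_dichotomy
    (D : Set (ℝ × ℝ)) (hD : IsOpen D) (hDne : D.Nonempty)
    (f : ℝ × ℝ → ℝ) (hf : ContDiffOn ℝ (⊤ : ℕ∞) f D)
    (u : ℝ × ℝ → ℝ) (hu : ContDiffOn ℝ (⊤ : ℕ∞) u D)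
    (hruled : ∀ p ∈ D, Qf f p = -(u p) * Pf f p)
    (hburgers : ∀ p ∈ D, pdy u p + u p * pdx u p = 0)
    (l1 l2 l3 : ℝ)
    (h1 : ∀ p ∈ D, lapS f (fun q => q.1) p = l1 * p.1)
    (h2 : ∀ p ∈ D, lapS f (fun q => q.2) p = l2 * p.2)
    (h3 : ∀ p ∈ D, lapS f f p = l3 * f p) :
    ((l1 = 0 ∧ l2 = 0 ∧ l3 = 0) ∧
        (∀ p ∈ D, pdx (pdx f) p + pdy (pdy f) p = 0)) ∨
      (¬(l1 = 0 ∧ l2 = 0 ∧ l3 = 0) ∧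
        (∀ p ∈ D,
          pdx (pdx f) p + pdy (pdy f) p =
            (1 / 2) * ((l2 - l1) * (p.1 * p.2) - 2 * l3 * f p) *
              (1 + (pdx f p + p.2 / 2) ^ 2 * (1 + u p ^ 2)) ^ 2) ∧
        (¬(∀ p ∈ D, pdx (pdx f) p + pdy (pdy f) p = 0) →
          (l2 - l1 ≠ 0 ∨ l3 ≠ 0))) := by
  have key := main_pde D hD f hf u hu hruled hburgers l1 l2 l3 h1 h2 h3
  by_cases hc : l1 = 0 ∧ l2 = 0 ∧ l3 = 0
  · left
    refine ⟨hc, fun p hp => ?_⟩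
    rw [key p hp, hc.1, hc.2.1, hc.2.2]
    ring
  · right
    refine ⟨hc, fun p hp => key p hp, ?_⟩
    intro hnh
    by_contra hcon
    push_neg at hcon
    apply hnh
    intro p hp
    rw [key p hp, hcon.1, hcon.2]
    ring
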